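/- Fix integers q₁,...,q₅ with q₂,q₃,q₄ > 0, q₅ < 0, and q₁+q₅ < 0, and set q_m = max{q₂,q₃,q₄}. Let B ∈ V, and let h₀ ∈ Sp2 be any element whose second column has first four entries equal to conj(s₅(B))/|s₅(B)|. Then for each ℓ ∈ {2,3,4}, (|(Bh₀)_{ℓ2}|² + |(Bh₀)_{ℓ4}|²) q_ℓ ≤ 2/9. -/

import Mathlib

open Finset

noncomputable section

/-- SU(5): 5×5 special unitary complex matrices. -/
def SU5 : Set (Matrix (Fin 5) (Fin 5) ℂ) :=
  {A | A * A.conjTranspose = 1 ∧ A.det = 1}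

/-- The image of the embedding Sp(2) ↪ SU(5). -/
def Sp2 : Set (Matrix (Fin 5) (Fin 5) ℂ) :=
  {h | h ∈ SU5 ∧
    (∀ i : Fin 5, h i 4 = if i = 4 then 1 else 0) ∧
    (∀ i : Fin 5, h 4 i = if i = 4 then 1 else 0) ∧
    (∀ i j : Fin 5, i < 2 → j < 2 →
      h (i + 2) (j + 2) = (starRingEnd ℂ) (h i j) ∧
      h (i + 2) j = -(starRingEnd ℂ) (h i (j + 2)))}

/-- q_m = max{q₂,q₃,q₄} (0-indexed: entries 1,2,3). -/
def qm (q : Fin 5 → ℤ) : ℤ := max (q 1) (max (q 2) (q 3))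

/-- Squared norm of the first four entries of row `i` of `B`. -/
def rowNormSq (B : Matrix (Fin 5) (Fin 5) ℂ) (i : Fin 5) : ℝ :=
  ∑ j : Fin 4, ‖B i j.castSucc‖ ^ 2

/-- The open set V ⊆ SU(5). -/
def V (q : Fin 5 → ℤ) : Set (Matrix (Fin 5) (Fin 5) ℂ) :=
  {B | B ∈ SU5 ∧
    (∀ i j : Fin 5, (i, j) ∉ ({(0,0),(1,1),(2,3),(3,4),(4,2)} : Set (Fin 5 × Fin 5)) →
      ‖B i j‖ < 1 / (16 * Real.sqrt (qm q))) ∧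
    7 / 8 < rowNormSq B 4 ∧
    Real.sqrt (rowNormSq B 0) < Real.sqrt (rowNormSq B 4) ∧
    0 < ∑ ℓ : Fin 5, (‖B ℓ 1‖ ^ 2 + ‖B ℓ 3‖ ^ 2) * (q ℓ : ℝ)}

lemma row_sq (B : Matrix (Fin 5) (Fin 5) ℂ) (hU : B * B.conjTranspose = 1) (i : Fin 5) :
    ∑ k : Fin 5, ‖B i k‖ ^ 2 = 1 := by
  have h := congrFun (congrFun hU i) i
  rw [Matrix.mul_apply] at h
  simp only [Matrix.conjTranspose_apply, Matrix.one_apply_eq] at h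
  have h2 : ((∑ k : Fin 5, ‖B i k‖ ^ 2 : ℝ) : ℂ) = 1 := by
    push_cast
    rw [← h]
    refine Finset.sum_congr rfl fun k _ => ?_
    rw [show ((‖B i k‖ : ℂ))^2 = ((‖B i k‖^2 : ℝ) : ℂ) by push_cast; ring,
      ← Complex.normSq_eq_norm_sq, Complex.star_def, Complex.mul_conj]
  exact_mod_cast h2

lemma row_orth (B : Matrix (Fin 5) (Fin 5) ℂ) (hU : B * B.conjTranspose = 1)
    (ℓ : Fin 5) (hℓ : ℓ ≠ 4) :
    ∑ k : Fin 5, B ℓ k * (starRingEnd ℂ) (B 4 k) = 0 := by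
  have h := congrFun (congrFun hU ℓ) 4
  rw [Matrix.mul_apply] at h
  simpa [Matrix.conjTranspose_apply, Matrix.one_apply, hℓ] using h

lemma entry_le_one (B : Matrix (Fin 5) (Fin 5) ℂ) (hU : B * B.conjTranspose = 1)
    (i j : Fin 5) : ‖B i j‖ ≤ 1 := by
  have h := row_sq B hU i
  have h1 : ‖B i j‖ ^ 2 ≤ 1 := by
    rw [← h]
    exact Finset.single_le_sum (f := fun k => ‖B i k‖ ^ 2)
      (fun k _ => sq_nonneg _) (Finset.mem_univ j)
  nlinarith [norm_nonneg (B i j)]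

set_option maxHeartbeats 1600000 in
theorem stmt12 (q : Fin 5 → ℤ) (h2 : 0 < q 1) (h3 : 0 < q 2) (h4 : 0 < q 3)
    (h5 : q 4 < 0) (h15 : q 0 + q 4 < 0)
    (B : Matrix (Fin 5) (Fin 5) ℂ) (hB : B ∈ V q)
    (h₀ : Matrix (Fin 5) (Fin 5) ℂ) (hh₀ : h₀ ∈ Sp2)
    (hcol : ∀ i : Fin 4, h₀ i.castSucc 1 =
      (starRingEnd ℂ) (B 4 i.castSucc) / (Real.sqrt (rowNormSq B 4) : ℂ)) :
    ∀ ℓ : Fin 5, (ℓ = 1 ∨ ℓ = 2 ∨ ℓ = 3) →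
      (‖(B * h₀) ℓ 1‖ ^ 2 + ‖(B * h₀) ℓ 3‖ ^ 2) * (q ℓ : ℝ) ≤ 2 / 9 := by
  obtain ⟨⟨hU, -⟩, hsmall, hS78, -, -⟩ := hB
  intro ℓ hℓ
  set ε : ℝ := 1 / (16 * Real.sqrt (qm q)) with hεdef
  set S : ℝ := rowNormSq B 4 with hSdef
  set N : ℝ := Real.sqrt S with hNdef
  -- basic positivity
  have hqm1 : (1 : ℤ) ≤ qm q := le_trans h2 (le_max_left _ _)
  have hqmR : (1 : ℝ) ≤ (qm q : ℝ) := by exact_mod_cast hqm1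
  have hsq1 : (1 : ℝ) ≤ Real.sqrt (qm q) := by
    rw [show (1:ℝ) = Real.sqrt 1 by simp]
    exact Real.sqrt_le_sqrt hqmR
  have hε : 0 < ε := by positivity
  have hε2 : ε ^ 2 = 1 / (256 * (qm q : ℝ)) := by
    rw [hεdef]
    rw [div_pow, mul_pow, Real.sq_sqrt (by linarith : (0:ℝ) ≤ (qm q : ℝ))]
    norm_num
  have hSpos : 0 < S := by linarith
  have hN : 0 < N := Real.sqrt_pos.mpr hSpos
  have hN2 : N ^ 2 = S := Real.sq_sqrt hSpos.le
  have hNC : ((N : ℂ)) ≠ 0 := by exact_mod_cast hN.ne'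
  have hS1 : S ≤ 1 := by
    have h := row_sq B hU 4
    rw [Fin.sum_univ_castSucc] at h
    have : S + ‖B 4 (Fin.last 4)‖ ^ 2 = 1 := h
    nlinarith [sq_nonneg (‖B 4 (Fin.last 4)‖)]
  -- column entries of h₀
  have c0 : h₀ 0 1 = (starRingEnd ℂ) (B 4 0) / (N : ℂ) := by
    have := hcol 0; rwa [show ((0:Fin 4).castSucc) = (0:Fin 5) by decide] at this
  have c1 : h₀ 1 1 = (starRingEnd ℂ) (B 4 1) / (N : ℂ) := by
    have := hcol 1; rwa [show ((1:Fin 4).castSucc) = (1:Fin 5) by decide] at this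
  have c2 : h₀ 2 1 = (starRingEnd ℂ) (B 4 2) / (N : ℂ) := by
    have := hcol 2; rwa [show ((2:Fin 4).castSucc) = (2:Fin 5) by decide] at this
  have c3 : h₀ 3 1 = (starRingEnd ℂ) (B 4 3) / (N : ℂ) := by
    have := hcol 3; rwa [show ((3:Fin 4).castSucc) = (3:Fin 5) by decide] at this
  have e41 : h₀ 4 1 = 0 := by simpa using hh₀.2.2.1 1
  have e43 : h₀ 4 3 = 0 := by simpa using hh₀.2.2.1 3
  have r01 := hh₀.2.2.2 0 1 (by decide) (by decide)
  have r11 := hh₀.2.2.2 1 1 (by decide) (by decide)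
  simp only [show ((0:Fin 5) + 2) = (2:Fin 5) by decide, show ((1:Fin 5) + 2) = (3:Fin 5) by decide] at r01 r11
  have c23 : h₀ 2 3 = B 4 0 / (N : ℂ) := by
    rw [r01.1, c0, map_div₀, Complex.conj_conj, Complex.conj_ofReal]
  have c33 : h₀ 3 3 = B 4 1 / (N : ℂ) := by
    rw [r11.1, c1, map_div₀, Complex.conj_conj, Complex.conj_ofReal]
  have c03 : h₀ 0 3 = -(B 4 2 / (N : ℂ)) := by
    have h := r01.2
    rw [c2] at h
    have h2 := congrArg (starRingEnd ℂ) h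
    simp only [map_div₀, map_neg, Complex.conj_conj, Complex.conj_ofReal] at h2
    linear_combination h2
  have c13 : h₀ 1 3 = -(B 4 3 / (N : ℂ)) := by
    have h := r11.2
    rw [c3] at h
    have h2 := congrArg (starRingEnd ℂ) h
    simp only [map_div₀, map_neg, Complex.conj_conj, Complex.conj_ofReal] at h2
    linear_combination h2
  -- row-specific facts
  have hℓ4 : ℓ ≠ 4 := by rcases hℓ with rfl | rfl | rfl <;> decide
  have a0 : ‖B ℓ 0‖ < ε := by
    rcases hℓ with rfl | rfl | rfl <;> exact hsmall _ 0 (by simp [Prod.ext_iff])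
  have a44 : ‖B 4 4‖ < ε := hsmall 4 4 (by simp [Prod.ext_iff])
  have a40 : ‖B 4 0‖ < ε := hsmall 4 0 (by simp [Prod.ext_iff])
  have a41 : ‖B 4 1‖ < ε := hsmall 4 1 (by simp [Prod.ext_iff])
  have a43 : ‖B 4 3‖ < ε := hsmall 4 3 (by simp [Prod.ext_iff])
  have b1 : ‖B ℓ 1‖ ≤ 1 := entry_le_one B hU ℓ 1
  have b2 : ‖B ℓ 2‖ ≤ 1 := entry_le_one B hU ℓ 2
  have b3 : ‖B ℓ 3‖ ≤ 1 := entry_le_one B hU ℓ 3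
  have b4 : ‖B ℓ 4‖ ≤ 1 := entry_le_one B hU ℓ 4
  have b42 : ‖B 4 2‖ ≤ 1 := entry_le_one B hU 4 2
  -- formula for column 1 entry
  have orth := row_orth B hU ℓ hℓ4
  rw [Fin.sum_univ_five] at orth
  have hX1 : (B * h₀) ℓ 1 = -(B ℓ 4 * (starRingEnd ℂ) (B 4 4)) / (N : ℂ) := by
    rw [Matrix.mul_apply, Fin.sum_univ_five, c0, c1, c2, c3, e41]
    field_simp
    linear_combination orth
  have hX3 : (B * h₀) ℓ 3 =
      (-(B ℓ 0 * B 4 2) - B ℓ 1 * B 4 3 + B ℓ 2 * B 4 0 + B ℓ 3 * B 4 1) / (N : ℂ) := by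
    rw [Matrix.mul_apply, Fin.sum_univ_five, c03, c13, c23, c33, e43]
    field_simp
    ring
  -- abs bounds
  have hA1 : ‖(B * h₀) ℓ 1‖ ≤ ε / N := by
    rw [hX1, norm_div, norm_neg, norm_mul, Complex.norm_conj, Complex.norm_real, Real.norm_of_nonneg hN.le]
    have : ‖B ℓ 4‖ * ‖B 4 4‖ ≤ ε := by
      nlinarith [norm_nonneg (B ℓ 4), norm_nonneg (B 4 4)]
    exact div_le_div_of_nonneg_right this hN.le
  have hA3 : ‖(B * h₀) ℓ 3‖ ≤ 4 * ε / N := by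
    rw [hX3, norm_div, Complex.norm_real, Real.norm_of_nonneg hN.le]
    have tri : ‖-(B ℓ 0 * B 4 2) - B ℓ 1 * B 4 3 + B ℓ 2 * B 4 0 + B ℓ 3 * B 4 1‖
        ≤ ‖B ℓ 0 * B 4 2‖ + ‖B ℓ 1 * B 4 3‖
          + ‖B ℓ 2 * B 4 0‖ + ‖B ℓ 3 * B 4 1‖ := by
      calc ‖-(B ℓ 0 * B 4 2) - B ℓ 1 * B 4 3 + B ℓ 2 * B 4 0 + B ℓ 3 * B 4 1‖
          ≤ ‖-(B ℓ 0 * B 4 2) - B ℓ 1 * B 4 3 + B ℓ 2 * B 4 0‖ + ‖B ℓ 3 * B 4 1‖ :=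
            norm_add_le _ _
        _ ≤ ‖-(B ℓ 0 * B 4 2) - B ℓ 1 * B 4 3‖ + ‖B ℓ 2 * B 4 0‖ + ‖B ℓ 3 * B 4 1‖ := by
            gcongr; exact norm_add_le _ _
        _ ≤ ‖-(B ℓ 0 * B 4 2)‖ + ‖B ℓ 1 * B 4 3‖ + ‖B ℓ 2 * B 4 0‖ + ‖B ℓ 3 * B 4 1‖ := by
            have := norm_sub_le (-(B ℓ 0 * B 4 2)) (B ℓ 1 * B 4 3)
            linarith
        _ = ‖B ℓ 0 * B 4 2‖ + ‖B ℓ 1 * B 4 3‖ + ‖B ℓ 2 * B 4 0‖ + ‖B ℓ 3 * B 4 1‖ := by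
            rw [norm_neg]
    have hnum : ‖-(B ℓ 0 * B 4 2) - B ℓ 1 * B 4 3 + B ℓ 2 * B 4 0 + B ℓ 3 * B 4 1‖
        ≤ 4 * ε := by
      have m1 : ‖B ℓ 0 * B 4 2‖ ≤ ε := by
        rw [norm_mul]
        nlinarith [norm_nonneg (B ℓ 0), norm_nonneg (B 4 2)]
      have m2 : ‖B ℓ 1 * B 4 3‖ ≤ ε := by
        rw [norm_mul]
        nlinarith [norm_nonneg (B ℓ 1), norm_nonneg (B 4 3)]
      have m3 : ‖B ℓ 2 * B 4 0‖ ≤ ε := by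
        rw [norm_mul]
        nlinarith [norm_nonneg (B ℓ 2), norm_nonneg (B 4 0)]
      have m4 : ‖B ℓ 3 * B 4 1‖ ≤ ε := by
        rw [norm_mul]
        nlinarith [norm_nonneg (B ℓ 3), norm_nonneg (B 4 1)]
      linarith
    exact div_le_div_of_nonneg_right hnum hN.le
  -- squares
  have s1 : ‖(B * h₀) ℓ 1‖ ^ 2 ≤ ε ^ 2 / S := by
    have := pow_le_pow_left₀ (norm_nonneg _) hA1 2
    rwa [div_pow, hN2] at this
  have s3 : ‖(B * h₀) ℓ 3‖ ^ 2 ≤ 16 * (ε ^ 2 / S) := by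
    have := pow_le_pow_left₀ (norm_nonneg _) hA3 2
    rw [div_pow, hN2] at this
    calc ‖(B * h₀) ℓ 3‖ ^ 2 ≤ (4 * ε) ^ 2 / S := this
      _ = 16 * (ε ^ 2 / S) := by ring
  have hql : (q ℓ : ℝ) ≤ (qm q : ℝ) := by
    have : q ℓ ≤ qm q := by
      rcases hℓ with rfl | rfl | rfl
      · exact le_max_left _ _
      · exact (le_max_left _ _).trans (le_max_right _ _)
      · exact (le_max_right _ _).trans (le_max_right _ _)
    exact_mod_cast this
  have hqlpos : (0 : ℝ) < (q ℓ : ℝ) := by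
    rcases hℓ with rfl | rfl | rfl <;> exact_mod_cast ‹_›
  -- final arithmetic
  have hεS : ε ^ 2 / S ≤ 1 / (224 * (qm q : ℝ)) := by
    rw [hε2, div_div]
    apply one_div_le_one_div_of_le (by nlinarith)
    nlinarith
  have key : ‖(B * h₀) ℓ 1‖ ^ 2 + ‖(B * h₀) ℓ 3‖ ^ 2
      ≤ 17 * (1 / (224 * (qm q : ℝ))) := by
    have h0 : ε ^ 2 / S ≥ 0 := by positivity
    nlinarith
  have h224 : (0:ℝ) < 224 * (qm q : ℝ) := by nlinarith
  calc (‖(B * h₀) ℓ 1‖ ^ 2 + ‖(B * h₀) ℓ 3‖ ^ 2) * (q ℓ : ℝ)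
      ≤ (17 * (1 / (224 * (qm q : ℝ)))) * (q ℓ : ℝ) :=
        mul_le_mul_of_nonneg_right key hqlpos.le
    _ = 17 * (q ℓ : ℝ) / (224 * (qm q : ℝ)) := by ring
    _ ≤ 2 / 9 := by
        rw [div_le_div_iff₀ h224 (by norm_num)]
        nlinarith
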